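/- Let φ, κ, β_i, γ̃_ij, A_ij be smooth fields on ℝ × ℝ³ satisfying the linearized BSSN evolution equations (E1) and (E4). Then at every point of ℝ × ℝ³, ∂_t(∂_l∂_j γ̃_lj − 8Δφ) = −2 ∂_i M_i, where M_i := ∂_l A_il − (2/3)∂_i κ is the momentum constraint quantity. In particular, if M_i = 0 everywhere then the Hamiltonian constraint quantity ∂_l∂_j γ̃_lj − 8Δφ is independent of time. -/

import Mathlib

noncomputable section

/-- Spacetime ℝ × ℝ³. -/
abbrev Spc : Type := ℝ × (Fin 3 → ℝ)

/-- Time derivative ∂_t. -/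
noncomputable def pt (f : Spc → ℝ) : Spc → ℝ :=
  fun p => deriv (fun s => f (s, p.2)) p.1

/-- Spatial partial derivative ∂_i. -/
noncomputable def ps (i : Fin 3) (f : Spc → ℝ) : Spc → ℝ :=
  fun p => deriv (fun s => f (p.1, Function.update p.2 i s)) (p.2 i)

/-- Spatial Laplacian Δ = Σ_i ∂_i ∂_i. -/
noncomputable def lap (f : Spc → ℝ) : Spc → ℝ :=
  fun p => ∑ i : Fin 3, ps i (ps i f) p

/-- Kronecker delta δ_ij. -/
noncomputable def kron (i j : Fin 3) : ℝ := if i = j then 1 else 0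

/-- If (E1) and (E4) hold, then `∂_t(∂_l∂_j γ̃_lj − 8Δφ) = −2 ∂_i M_i`; in particular,
if the momentum constraint `M_i = 0` holds everywhere, the Hamiltonian constraint
quantity `∂_l∂_j γ̃_lj − 8Δφ` is independent of time. -/

lemma wt1 : (1 : WithTop ℕ∞) ≤ ((⊤:ℕ∞) : WithTop ℕ∞) := by
  rw [show ((1:WithTop ℕ∞)) = (((1:ℕ∞)):WithTop ℕ∞) by rfl]
  exact WithTop.coe_le_coe.2 le_top
lemma wt2 : (2 : WithTop ℕ∞) ≤ ((⊤:ℕ∞) : WithTop ℕ∞) := by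
  rw [show ((2:WithTop ℕ∞)) = (((2:ℕ∞)):WithTop ℕ∞) by rfl]
  exact WithTop.coe_le_coe.2 le_top
lemma wtt : ((⊤:ℕ∞) : WithTop ℕ∞) + 1 ≤ ((⊤:ℕ∞) : WithTop ℕ∞) := by
  rw [show ((⊤:ℕ∞):WithTop ℕ∞) + 1 = (((⊤+1:ℕ∞)):WithTop ℕ∞) from (WithTop.coe_add _ _).symm]
  exact WithTop.coe_le_coe.2 le_top

noncomputable def Dv (v : Spc) (f : Spc → ℝ) : Spc → ℝ := fun p => fderiv ℝ f p v

def et : Spc := (1, 0)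
def ex (i : Fin 3) : Spc := (0, Pi.single i 1)

lemma dA {f : Spc → ℝ} (hf : ContDiff ℝ (⊤ : ℕ∞) f) (p : Spc) : DifferentiableAt ℝ f p :=
  hf.differentiable (by simp) p

lemma pt_eq_Dv {f : Spc → ℝ} (hf : ContDiff ℝ (⊤ : ℕ∞) f) : pt f = Dv et f := by
  funext p
  have hc : HasDerivAt (fun s : ℝ => ((s, p.2) : Spc)) et p.1 :=
    (hasDerivAt_id p.1).prodMk (hasDerivAt_const _ _)
  exact ((dA hf p).hasFDerivAt.comp_hasDerivAt p.1 hc).deriv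

lemma ps_eq_Dv (i : Fin 3) {f : Spc → ℝ} (hf : ContDiff ℝ (⊤ : ℕ∞) f) :
    ps i f = Dv (ex i) f := by
  funext p
  have hc : HasDerivAt (fun s : ℝ => ((p.1, Function.update p.2 i s) : Spc)) (ex i) (p.2 i) := by
    refine (hasDerivAt_const _ _).prodMk (hasDerivAt_pi.2 fun j => ?_)
    by_cases h : j = i
    · subst h
      simpa [Pi.single_eq_same] using (hasDerivAt_id' (p.2 j))
    · simpa [Function.update_of_ne h, Pi.single_eq_of_ne h] using
        (hasDerivAt_const (p.2 i) (p.2 j))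
  have hp : ((p.1, Function.update p.2 i (p.2 i)) : Spc) = p := by
    simp [Function.update_eq_self]
  have hd := (dA hf p).hasFDerivAt
  rw [show p = ((p.1, Function.update p.2 i (p.2 i)) : Spc) from hp.symm] at hd
  have := hd.comp_hasDerivAt (p.2 i) hc
  simpa [hp, Function.comp_def, ps, Dv] using this.deriv

lemma contDiff_Dv (v : Spc) {f : Spc → ℝ} (hf : ContDiff ℝ (⊤ : ℕ∞) f) :
    ContDiff ℝ (⊤ : ℕ∞) (Dv v f) :=
  (hf.fderiv_right wtt).clm_apply contDiff_const

lemma ps_smooth (i : Fin 3) {f : Spc → ℝ} (hf : ContDiff ℝ (⊤ : ℕ∞) f) :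
    ContDiff ℝ (⊤ : ℕ∞) (ps i f) := by
  rw [ps_eq_Dv i hf]; exact contDiff_Dv _ hf

lemma pt_smooth {f : Spc → ℝ} (hf : ContDiff ℝ (⊤ : ℕ∞) f) :
    ContDiff ℝ (⊤ : ℕ∞) (pt f) := by
  rw [pt_eq_Dv hf]; exact contDiff_Dv _ hf

lemma Dv_comm (v w : Spc) {f : Spc → ℝ} (hf : ContDiff ℝ (⊤ : ℕ∞) f) :
    Dv v (Dv w f) = Dv w (Dv v f) := by
  funext p
  have hsym : IsSymmSndFDerivAt ℝ f p := hf.contDiffAt.isSymmSndFDerivAt (by rw [minSmoothness_of_isRCLikeNormedField]; exact wt2)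
  have hdf : DifferentiableAt ℝ (fderiv ℝ f) p :=
    ((hf.fderiv_right wtt).differentiable (by simp)) p
  have h1 : ∀ u z : Spc, fderiv ℝ (fun q => fderiv ℝ f q u) p z
      = fderiv ℝ (fderiv ℝ f) p z u := by
    intro u z
    rw [fderiv_clm_apply hdf (differentiableAt_const u)]
    simp
  show fderiv ℝ (fun q => fderiv ℝ f q w) p v = fderiv ℝ (fun q => fderiv ℝ f q v) p w
  rw [h1, h1, hsym v w]

lemma ps_comm (a b : Fin 3) {f : Spc → ℝ} (hf : ContDiff ℝ (⊤ : ℕ∞) f) :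
    ps a (ps b f) = ps b (ps a f) := by
  rw [ps_eq_Dv b hf, ps_eq_Dv a (contDiff_Dv _ hf), ps_eq_Dv a hf,
    ps_eq_Dv b (contDiff_Dv _ hf)]
  exact Dv_comm _ _ hf

lemma pt_ps_comm (a : Fin 3) {f : Spc → ℝ} (hf : ContDiff ℝ (⊤ : ℕ∞) f) :
    pt (ps a f) = ps a (pt f) := by
  rw [ps_eq_Dv a hf, pt_eq_Dv (contDiff_Dv _ hf), pt_eq_Dv hf,
    ps_eq_Dv a (contDiff_Dv _ hf)]
  exact Dv_comm _ _ hf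

lemma ps_add (i : Fin 3) {f g : Spc → ℝ} (hf : ContDiff ℝ (⊤ : ℕ∞) f)
    (hg : ContDiff ℝ (⊤ : ℕ∞) g) :
    ps i (fun p => f p + g p) = fun p => ps i f p + ps i g p := by
  rw [ps_eq_Dv i (hf.add hg), ps_eq_Dv i hf, ps_eq_Dv i hg]
  funext p
  show fderiv ℝ (fun p => f p + g p) p (ex i) = _
  rw [fderiv_fun_add (dA hf p) (dA hg p)]
  rfl

lemma ps_sub (i : Fin 3) {f g : Spc → ℝ} (hf : ContDiff ℝ (⊤ : ℕ∞) f)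
    (hg : ContDiff ℝ (⊤ : ℕ∞) g) :
    ps i (fun p => f p - g p) = fun p => ps i f p - ps i g p := by
  rw [ps_eq_Dv i (hf.sub hg), ps_eq_Dv i hf, ps_eq_Dv i hg]
  funext p
  show fderiv ℝ (fun p => f p - g p) p (ex i) = _
  rw [fderiv_fun_sub (dA hf p) (dA hg p)]
  rfl

lemma ps_const_mul (i : Fin 3) (c : ℝ) {f : Spc → ℝ} (hf : ContDiff ℝ (⊤ : ℕ∞) f) :
    ps i (fun p => c * f p) = fun p => c * ps i f p := by
  rw [ps_eq_Dv i (contDiff_const.mul hf), ps_eq_Dv i hf]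
  funext p
  show fderiv ℝ (fun p => c * f p) p (ex i) = _
  rw [fderiv_const_mul (dA hf p)]
  rfl

lemma ps_sum (i : Fin 3) {ι : Type*} (s : Finset ι) {F : ι → Spc → ℝ}
    (hF : ∀ j ∈ s, ContDiff ℝ (⊤ : ℕ∞) (F j)) :
    ps i (fun p => ∑ j ∈ s, F j p) = fun p => ∑ j ∈ s, ps i (F j) p := by
  classical
  induction s using Finset.induction_on with
  | empty => funext p; simp [ps]
  | @insert a s hnot ih =>
      have hFa := hF a (Finset.mem_insert_self a s)
      have hFs : ∀ j ∈ s, ContDiff ℝ (⊤ : ℕ∞) (F j) :=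
        fun j hj => hF j (Finset.mem_insert_of_mem hj)
      have hsum : ContDiff ℝ (⊤ : ℕ∞) (fun p => ∑ j ∈ s, F j p) := ContDiff.sum hFs
      have : (fun p => ∑ j ∈ Insert.insert a s, F j p)
          = fun p => F a p + ∑ j ∈ s, F j p := by
        funext p; rw [Finset.sum_insert hnot]
      rw [this, ps_add i hFa hsum, ih hFs]
      funext p; rw [Finset.sum_insert hnot]

lemma pt_sub {f g : Spc → ℝ} (hf : ContDiff ℝ (⊤ : ℕ∞) f) (hg : ContDiff ℝ (⊤ : ℕ∞) g) :
    pt (fun p => f p - g p) = fun p => pt f p - pt g p := by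
  rw [pt_eq_Dv (hf.sub hg), pt_eq_Dv hf, pt_eq_Dv hg]
  funext p
  show fderiv ℝ (fun p => f p - g p) p et = _
  rw [fderiv_fun_sub (dA hf p) (dA hg p)]
  rfl

lemma pt_const_mul (c : ℝ) {f : Spc → ℝ} (hf : ContDiff ℝ (⊤ : ℕ∞) f) :
    pt (fun p => c * f p) = fun p => c * pt f p := by
  rw [pt_eq_Dv (contDiff_const.mul hf), pt_eq_Dv hf]
  funext p
  show fderiv ℝ (fun p => c * f p) p et = _
  rw [fderiv_const_mul (dA hf p)]
  rfl

lemma pt_sum {ι : Type*} (s : Finset ι) {F : ι → Spc → ℝ}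
    (hF : ∀ j ∈ s, ContDiff ℝ (⊤ : ℕ∞) (F j)) :
    pt (fun p => ∑ j ∈ s, F j p) = fun p => ∑ j ∈ s, pt (F j) p := by
  classical
  induction s using Finset.induction_on with
  | empty => funext p; simp [pt]
  | @insert a s hnot ih =>
      have hFa := hF a (Finset.mem_insert_self a s)
      have hFs : ∀ j ∈ s, ContDiff ℝ (⊤ : ℕ∞) (F j) :=
        fun j hj => hF j (Finset.mem_insert_of_mem hj)
      have hsum : ContDiff ℝ (⊤ : ℕ∞) (fun p => ∑ j ∈ s, F j p) := ContDiff.sum hFs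
      have h2 : (fun p => ∑ j ∈ Insert.insert a s, F j p)
          = fun p => F a p + ∑ j ∈ s, F j p := by
        funext p; rw [Finset.sum_insert hnot]
      have hadd : pt (fun p => F a p + ∑ j ∈ s, F j p)
          = fun p => pt (F a) p + pt (fun p => ∑ j ∈ s, F j p) p := by
        rw [pt_eq_Dv (hFa.add hsum), pt_eq_Dv hFa, pt_eq_Dv hsum]
        funext p
        show fderiv ℝ (fun p => F a p + ∑ j ∈ s, F j p) p et = _
        rw [fderiv_fun_add (dA hFa p) (dA hsum p)]
        rfl
      rw [h2, hadd, ih hFs]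
      funext p; rw [Finset.sum_insert hnot]

theorem hamiltonian_constraint_evolution_gamma
    (φ κ : Spc → ℝ) (β : Fin 3 → Spc → ℝ)
    (γ A : Fin 3 → Fin 3 → Spc → ℝ)
    (hφ : ContDiff ℝ (⊤ : ℕ∞) φ) (hκ : ContDiff ℝ (⊤ : ℕ∞) κ)
    (hβ : ∀ i, ContDiff ℝ (⊤ : ℕ∞) (β i))
    (hγ : ∀ i j, ContDiff ℝ (⊤ : ℕ∞) (γ i j)) (hA : ∀ i j, ContDiff ℝ (⊤ : ℕ∞) (A i j))
    (hγsym : ∀ i j, γ i j = γ j i) (hAsym : ∀ i j, A i j = A j i)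
    (E1 : ∀ p, pt φ p = -(1/6) * κ p + (1/6) * ∑ l, ps l (β l) p)
    (E4 : ∀ i j p, pt (γ i j) p =
      -2 * A i j p + ps i (β j) p + ps j (β i) p
        - (2/3) * kron i j * ∑ l, ps l (β l) p)
    (M : Fin 3 → Spc → ℝ)
    (hM : ∀ i, M i = fun p => (∑ l, ps l (A i l) p) - (2/3) * ps i κ p)
    (H : Spc → ℝ)
    (hH : H = fun p => (∑ l, ∑ j, ps l (ps j (γ l j)) p) - 8 * lap φ p) :
    (∀ p, pt H p = -2 * ∑ i, ps i (M i) p) ∧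
      ((∀ i p, M i p = 0) → ∀ t₁ t₂ : ℝ, ∀ x : Fin 3 → ℝ, H (t₁, x) = H (t₂, x)) := by
  classical
  obtain ⟨b, hb⟩ : ∃ b : Spc → ℝ, b = fun p => ∑ l, ps l (β l) p := ⟨_, rfl⟩
  have sb : ContDiff ℝ (⊤ : ℕ∞) b := by
    rw [hb]; exact ContDiff.sum fun l _ => ps_smooth l (hβ l)
  -- rewritten evolution equations
  have hptφ : pt φ = fun p => -(1/6) * κ p + (1/6) * b p := by
    funext p; simp only [hb]; exact E1 p
  have hptγ : ∀ i j, pt (γ i j) = fun p =>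
      -2 * A i j p + ps i (β j) p + ps j (β i) p - (2/3) * kron i j * b p := by
    intro i j; funext p; simp only [hb]; exact E4 i j p
  -- generic linear expansions
  have hlin4 : ∀ (m : Fin 3) (f1 f2 f3 f4 : Spc → ℝ),
      ContDiff ℝ (⊤ : ℕ∞) f1 → ContDiff ℝ (⊤ : ℕ∞) f2 → ContDiff ℝ (⊤ : ℕ∞) f3 →
      ContDiff ℝ (⊤ : ℕ∞) f4 → ∀ c : ℝ,
      ps m (fun p => -2 * f1 p + f2 p + f3 p - c * f4 p)
        = fun p => -2 * ps m f1 p + ps m f2 p + ps m f3 p - c * ps m f4 p := by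
    intro m f1 f2 f3 f4 h1 h2 h3 h4 c
    rw [ps_sub m (((contDiff_const.mul h1).add h2).add h3) (contDiff_const.mul h4),
      ps_add m ((contDiff_const.mul h1).add h2) h3,
      ps_add m (contDiff_const.mul h1) h2,
      ps_const_mul m (-2) h1, ps_const_mul m c h4]
  have hlin2 : ∀ (m : Fin 3) (c1 c2 : ℝ) (f1 f2 : Spc → ℝ),
      ContDiff ℝ (⊤ : ℕ∞) f1 → ContDiff ℝ (⊤ : ℕ∞) f2 →
      ps m (fun p => c1 * f1 p + c2 * f2 p)
        = fun p => c1 * ps m f1 p + c2 * ps m f2 p := by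
    intro m c1 c2 f1 f2 h1 h2
    rw [ps_add m (contDiff_const.mul h1) (contDiff_const.mul h2),
      ps_const_mul m c1 h1, ps_const_mul m c2 h2]
  -- commute pt inside two spatial derivatives
  have ptpsps : ∀ (a c : Fin 3) (f : Spc → ℝ), ContDiff ℝ (⊤ : ℕ∞) f →
      pt (ps a (ps c f)) = ps a (ps c (pt f)) := by
    intro a c f hf
    rw [pt_ps_comm a (ps_smooth c hf)]
    exact congrArg (ps a) (pt_ps_comm c hf)
  -- step R1
  have hin : ∀ l : Fin 3, ContDiff ℝ (⊤ : ℕ∞) (fun p => ∑ j, ps l (ps j (γ l j)) p) :=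
    fun l => ContDiff.sum fun j _ => ps_smooth l (ps_smooth j (hγ l j))
  have hT : ContDiff ℝ (⊤ : ℕ∞) (fun p => ∑ l, ∑ j, ps l (ps j (γ l j)) p) :=
    ContDiff.sum fun l _ => hin l
  have hL : ContDiff ℝ (⊤ : ℕ∞) (fun p => ∑ i, ps i (ps i φ) p) :=
    ContDiff.sum fun i _ => ps_smooth i (ps_smooth i hφ)
  have hH' : H = fun p => (∑ l, ∑ j, ps l (ps j (γ l j)) p) - 8 * ∑ i, ps i (ps i φ) p := by
    rw [hH]; simp only [lap]
  have sH : ContDiff ℝ (⊤ : ℕ∞) H := by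
    rw [hH']; exact hT.sub (contDiff_const.mul hL)
  have R1 : ∀ p, pt H p = (∑ l, ∑ j, ps l (ps j (pt (γ l j))) p)
      - 8 * ∑ i, ps i (ps i (pt φ)) p := by
    intro p
    calc pt H p
        = pt (fun p => (∑ l, ∑ j, ps l (ps j (γ l j)) p) - 8 * ∑ i, ps i (ps i φ) p) p := by
          rw [hH']
      _ = pt (fun p => ∑ l, ∑ j, ps l (ps j (γ l j)) p) p
          - pt (fun p => 8 * ∑ i, ps i (ps i φ) p) p :=
          congrFun (pt_sub hT (contDiff_const.mul hL)) p
      _ = pt (fun p => ∑ l, ∑ j, ps l (ps j (γ l j)) p) p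
          - 8 * pt (fun p => ∑ i, ps i (ps i φ) p) p := by
          rw [congrFun (pt_const_mul 8 hL) p]
      _ = (∑ l, pt (fun p => ∑ j, ps l (ps j (γ l j)) p) p)
          - 8 * ∑ i, pt (ps i (ps i φ)) p := by
          rw [congrFun (pt_sum Finset.univ fun l _ => hin l) p,
            congrFun (pt_sum Finset.univ fun i _ => ps_smooth i (ps_smooth i hφ)) p]
      _ = (∑ l, ∑ j, ps l (ps j (pt (γ l j))) p) - 8 * ∑ i, ps i (ps i (pt φ)) p := by
          congr 1
          · refine Finset.sum_congr rfl fun l _ => ?_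
            rw [congrFun (pt_sum Finset.univ fun j _ =>
              ps_smooth l (ps_smooth j (hγ l j))) p]
            exact Finset.sum_congr rfl fun j _ => congrFun (ptpsps l j (γ l j) (hγ l j)) p
          · congr 1
            exact Finset.sum_congr rfl fun i _ => congrFun (ptpsps i i φ hφ) p
  -- expanded second derivatives
  have hGG : ∀ l j : Fin 3, ps l (ps j (pt (γ l j)))
      = fun p => -2 * ps l (ps j (A l j)) p + ps l (ps j (ps l (β j))) p
          + ps l (ps j (ps j (β l))) p - (2/3) * kron l j * ps l (ps j b) p := by
    intro l j
    rw [hptγ l j,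
      hlin4 j (A l j) (ps l (β j)) (ps j (β l)) b (hA l j) (ps_smooth l (hβ j))
        (ps_smooth j (hβ l)) sb ((2/3) * kron l j),
      hlin4 l (ps j (A l j)) (ps j (ps l (β j))) (ps j (ps j (β l))) (ps j b)
        (ps_smooth j (hA l j)) (ps_smooth j (ps_smooth l (hβ j)))
        (ps_smooth j (ps_smooth j (hβ l))) (ps_smooth j sb) ((2/3) * kron l j)]
  have hps_ptφ : ∀ i : Fin 3, ps i (ps i (pt φ))
      = fun p => -(1/6) * ps i (ps i κ) p + (1/6) * ps i (ps i b) p := by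
    intro i
    rw [hptφ, hlin2 i (-(1/6)) (1/6) κ b hκ sb,
      hlin2 i (-(1/6)) (1/6) (ps i κ) (ps i b) (ps_smooth i hκ) (ps_smooth i sb)]
  -- momentum expansion
  have hMi : ∀ i : Fin 3, ps i (M i)
      = fun p => (∑ l, ps i (ps l (A i l)) p) - (2/3) * ps i (ps i κ) p := by
    intro i
    rw [hM i, ps_sub i (ContDiff.sum fun l _ => ps_smooth l (hA i l))
        (contDiff_const.mul (ps_smooth i hκ)),
      ps_sum i Finset.univ (fun l _ => ps_smooth l (hA i l)),
      ps_const_mul i (2/3) (ps_smooth i hκ)]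
  -- commutation identities
  have ct1 : ∀ l j : Fin 3, ps l (ps j (ps l (β j))) = ps l (ps l (ps j (β j))) :=
    fun l j => congrArg (ps l) (ps_comm j l (hβ j))
  have ct2 : ∀ l j : Fin 3, ps l (ps j (ps j (β l))) = ps j (ps j (ps l (β l))) := by
    intro l j
    calc ps l (ps j (ps j (β l))) = ps j (ps l (ps j (β l))) :=
          ps_comm l j (ps_smooth j (hβ l))
      _ = ps j (ps j (ps l (β l))) := congrArg (ps j) (ps_comm l j (hβ l))
  have hb2 : ∀ l : Fin 3, ps l (ps l b) = fun p => ∑ j, ps l (ps l (ps j (β j))) p := by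
    intro l
    have h1 : ps l b = fun p => ∑ j, ps l (ps j (β j)) p := by
      rw [hb]; exact ps_sum l Finset.univ fun j _ => ps_smooth j (hβ j)
    rw [h1, ps_sum l Finset.univ fun j _ => ps_smooth l (ps_smooth j (hβ j))]
  have knn : ∀ i : Fin 3, kron i i = 1 := fun i => by simp [kron]
  have part1 : ∀ p, pt H p = -2 * ∑ i, ps i (M i) p := by
    intro p
    rw [R1 p]
    simp only [hGG, hps_ptφ, hMi]
    simp only [Fin.sum_univ_three, knn,
      ct1 0 1, ct1 0 2, ct1 1 0, ct1 1 2, ct1 2 0, ct1 2 1,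
      ct2 0 1, ct2 0 2, ct2 1 0, ct2 1 2, ct2 2 0, ct2 2 1]
    simp only [hb2, Fin.sum_univ_three]
    have k01 : kron 0 1 = 0 := by simp [kron]
    have k02 : kron 0 2 = 0 := by simp [kron]
    have k10 : kron 1 0 = 0 := by simp [kron]
    have k12 : kron 1 2 = 0 := by simp [kron]
    have k20 : kron 2 0 = 0 := by simp [kron]
    have k21 : kron 2 1 = 0 := by simp [kron]
    rw [k01, k02, k10, k12, k20, k21]
    ring
  refine ⟨part1, ?_⟩
  intro hM0 t₁ t₂ x
  have hzero : ∀ p, pt H p = 0 := by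
    intro p
    rw [part1 p]
    have : ∀ i : Fin 3, ps i (M i) p = 0 := by
      intro i
      have : M i = fun _ => (0 : ℝ) := funext (hM0 i)
      rw [this]
      simp [ps]
    simp [this]
  have hslice : Differentiable ℝ (fun s : ℝ => H (s, x)) := by
    have : ContDiff ℝ (⊤ : ℕ∞) (fun s : ℝ => H (s, x)) :=
      sH.comp (contDiff_id.prodMk contDiff_const)
    exact this.differentiable (by simp)
  have hd0 : ∀ t : ℝ, deriv (fun s : ℝ => H (s, x)) t = 0 := fun t => hzero (t, x)
  exact is_const_of_deriv_eq_zero hslice hd0 t₁ t₂
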